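/- Define the reconstruction threshold $\lambda_c = \sup\{\lambda > 0 : q^*(\lambda) = 0\}$, where $q^*(\lambda)$ denotes a maximizer of $q \mapsto F(\lambda,q) = \psi(\lambda q) - \lambda q^2/4$ over $q \ge 0$ (when unique). If $P$ is centered with bounded support, then $\lambda_c \cdot (\mathbb{E}_P[X^2])^2 \le 1$. -/

import Mathlib

open MeasureTheory ProbabilityTheory Real Filter Set

noncomputable section

namespace SNG

lemma two_pi_pos : (0:ℝ) < 2 * π := by positivity

lemma sqrt2pi_pos : (0:ℝ) < Real.sqrt (2*π) := Real.sqrt_pos.2 two_pi_pos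

lemma log_sqrt2pi_nonneg : 0 ≤ Real.log (Real.sqrt (2*π)) := by
  apply Real.log_nonneg
  rw [show (1:ℝ) = Real.sqrt 1 by simp]
  exact Real.sqrt_le_sqrt (by nlinarith [Real.pi_gt_three])

lemma pdf_formula (y : ℝ) :
    gaussianPDFReal 0 1 y = (Real.sqrt (2*π))⁻¹ * Real.exp (-y^2/2) := by
  simp [gaussianPDFReal]

lemma pdf_pos (y : ℝ) : 0 < gaussianPDFReal 0 1 y := gaussianPDFReal_pos _ _ _ one_ne_zero

lemma pdf_le (y : ℝ) : gaussianPDFReal 0 1 y ≤ (Real.sqrt (2*π))⁻¹ := by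
  rw [pdf_formula]
  have h1 : Real.exp (-y^2/2) ≤ 1 := Real.exp_le_one_iff.2 (by nlinarith [sq_nonneg y])
  calc (Real.sqrt (2*π))⁻¹ * Real.exp (-y^2/2) ≤ (Real.sqrt (2*π))⁻¹ * 1 :=
        mul_le_mul_of_nonneg_left h1 (by positivity)
    _ = (Real.sqrt (2*π))⁻¹ := mul_one _

lemma pdf_cont (μ : ℝ) (v : NNReal) : Continuous (gaussianPDFReal μ v) := by
  rw [gaussianPDFReal_def]
  fun_prop

lemma one_le_exp_abs (z : ℝ) : 1 ≤ Real.exp |z| := by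
  have := Real.add_one_le_exp |z|
  have := abs_nonneg z
  linarith

lemma sq_le_exp_abs (x : ℝ) : x^2 ≤ 4 * Real.exp |x| := by
  have h1 : Real.exp |x| = Real.exp (|x|/2) * Real.exp (|x|/2) := by
    rw [← Real.exp_add]; ring_nf
  have h2 := Real.add_one_le_exp (|x|/2)
  have h3 := abs_nonneg x
  nlinarith [sq_abs x]

lemma abs_le_exp_abs (x : ℝ) : |x| ≤ Real.exp |x| := by
  have := Real.add_one_le_exp |x|; linarith

/-- Master integrability lemma for Lebesgue measure. -/
lemma integrable_vol_exp {f : ℝ → ℝ} (hf : AEStronglyMeasurable f (volume : Measure ℝ))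
    {C a b : ℝ} (hb : b < 0) (h : ∀ z, |f z| ≤ C * Real.exp (a * |z| + b * z ^ 2)) :
    Integrable f := by
  have hC : 0 ≤ C := by
    have h0 := (abs_nonneg (f 0)).trans (h 0)
    nlinarith [Real.exp_pos (a * |(0:ℝ)| + b * (0:ℝ)^2)]
  set δ : ℝ := -b/2 with hδ
  have hδ0 : 0 < δ := by simp only [hδ]; linarith
  refine Integrable.mono' ((integrable_exp_neg_mul_sq hδ0).const_mul
    (C * Real.exp (a^2/(4*δ)))) hf (ae_of_all _ fun z => ?_)
  rw [Real.norm_eq_abs]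
  refine (h z).trans ?_
  rw [mul_assoc, ← Real.exp_add]
  apply mul_le_mul_of_nonneg_left _ hC
  apply Real.exp_le_exp.2
  have hb' : b = -2*δ := by rw [hδ]; ring
  rw [hb']
  have h5 : a*|z| - δ*z^2 ≤ a^2/(4*δ) := by
    rw [le_div_iff₀ (by positivity : (0:ℝ) < 4*δ), ← sq_abs z]
    nlinarith [sq_nonneg (2*δ*|z| - a)]
  linarith

/-- Master integrability lemma for the standard Gaussian. -/
lemma integrable_G_exp {f : ℝ → ℝ} (hf : StronglyMeasurable f) {C a b : ℝ} (hb : b < 1/2)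
    (h : ∀ z, |f z| ≤ C * Real.exp (a * |z| + b * z ^ 2)) :
    Integrable f (gaussianReal 0 1) := by
  rw [gaussianReal_of_var_ne_zero 0 one_ne_zero,
    integrable_withDensity_iff (measurable_gaussianPDF 0 1)
      (ae_of_all _ fun x => ENNReal.ofReal_lt_top)]
  refine integrable_vol_exp (C := C * (Real.sqrt (2*π))⁻¹) (a := a) (b := b - 1/2)
    ?_ (by linarith) fun z => ?_
  · exact (hf.mul ((measurable_gaussianPDF 0 1).ennreal_toReal).stronglyMeasurable).aestronglyMeasurable
  · have hval : (gaussianPDF 0 1 z).toReal = gaussianPDFReal 0 1 z :=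
      ENNReal.toReal_ofReal (gaussianPDFReal_nonneg _ _ _)
    rw [abs_mul, hval, abs_of_pos (pdf_pos z), pdf_formula]
    have h1 := mul_le_mul_of_nonneg_right (h z)
      (le_of_lt (by positivity : (0:ℝ) < (Real.sqrt (2*π))⁻¹ * Real.exp (-z^2/2)))
    refine h1.trans (le_of_eq ?_)
    rw [mul_assoc, show Real.exp (a * |z| + b * z ^ 2) * ((Real.sqrt (2*π))⁻¹ * Real.exp (-z^2/2))
        = (Real.sqrt (2*π))⁻¹ * (Real.exp (a * |z| + b * z ^ 2) * Real.exp (-z^2/2)) from by ring,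
      ← Real.exp_add, show a * |z| + b * z ^ 2 + -z^2/2 = a * |z| + (b - 1/2) * z ^ 2 from by ring,
      ← mul_assoc]

lemma integral_G_eq (f : ℝ → ℝ) :
    ∫ z, f z ∂(gaussianReal 0 1) = ∫ z, gaussianPDFReal 0 1 z * f z := by
  rw [gaussianReal_of_var_ne_zero 0 one_ne_zero]
  have hd : (gaussianPDF 0 1) = fun x => ((Real.toNNReal (gaussianPDFReal 0 1 x) : NNReal) : ENNReal) := rfl
  rw [hd, integral_withDensity_eq_integral_smul (measurable_gaussianPDFReal 0 1).real_toNNReal]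
  congr 1; funext x
  simp [NNReal.smul_def, Real.coe_toNNReal _ (gaussianPDFReal_nonneg 0 1 x)]

lemma integral_id_G : ∫ z, z ∂(gaussianReal 0 1) = 0 := by
  rw [integral_G_eq]
  have hodd : (fun z : ℝ => gaussianPDFReal 0 1 (-z) * (-z)) = fun z => -(gaussianPDFReal 0 1 z * z) := by
    funext z; rw [pdf_formula, pdf_formula]; ring_nf
  have h := integral_neg_eq_self (fun z : ℝ => gaussianPDFReal 0 1 z * z) (volume : Measure ℝ)
  rw [show (fun z : ℝ => gaussianPDFReal 0 1 (-z) * (-z)) = fun z => -(gaussianPDFReal 0 1 z * z) from hodd] at h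
  rw [integral_neg] at h
  linarith

lemma exp_deriv_aux (x : ℝ) : HasDerivAt (fun y : ℝ => -Real.exp (-y^2/2)) (x * Real.exp (-x^2/2)) x := by
  have h0 : HasDerivAt (fun y : ℝ => -y^2/2) (-x) x := by
    have h1 : HasDerivAt (fun y : ℝ => y^2) (2*x) x := by
      simpa using hasDerivAt_pow 2 x
    have h2 := h1.neg.div_const 2
    exact h2.congr_deriv (by ring)
  have h3 := (h0.exp).neg
  exact h3.congr_deriv (by ring)

lemma integral_sq_vol : ∫ x : ℝ, x^2 * Real.exp (-x^2/2) = Real.sqrt (2*π) := by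
  have hu : ∀ x : ℝ, HasDerivAt (fun y : ℝ => y) 1 x := fun x => hasDerivAt_id x
  have huv' : Integrable (fun x : ℝ => x * (x * Real.exp (-x^2/2))) := by
    refine integrable_vol_exp (Continuous.aestronglyMeasurable (by fun_prop)) (C := 4) (a := 1) (b := -(1/2)) (by norm_num) fun z => ?_
    have h1 := sq_le_exp_abs z
    have h2 : |z * (z * Real.exp (-z^2/2))| = z^2 * Real.exp (-z^2/2) := by
      rw [show z * (z * Real.exp (-z^2/2)) = z^2 * Real.exp (-z^2/2) by ring, abs_of_nonneg (by positivity)]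
    rw [h2, show (1:ℝ) * |z| + -(1/2) * z^2 = |z| + (-z^2/2) from by ring, Real.exp_add]
    nlinarith [Real.exp_pos (-z^2/2)]
  have hu'v : Integrable (fun x : ℝ => 1 * -Real.exp (-x^2/2)) := by
    refine integrable_vol_exp (Continuous.aestronglyMeasurable (by fun_prop)) (C := 1) (a := 0) (b := -(1/2)) (by norm_num) fun z => ?_
    rw [show |1 * -Real.exp (-z^2/2)| = Real.exp (-z^2/2) from by rw [one_mul, abs_neg, abs_of_pos (Real.exp_pos _)]]
    apply le_of_eq
    rw [one_mul]
    congr 1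
    ring
  have huv : Integrable (fun x : ℝ => x * -Real.exp (-x^2/2)) := by
    refine integrable_vol_exp (Continuous.aestronglyMeasurable (by fun_prop)) (C := 1) (a := 1) (b := -(1/2)) (by norm_num) fun z => ?_
    have h2 : |z * -Real.exp (-z^2/2)| = |z| * Real.exp (-z^2/2) := by
      rw [abs_mul, abs_neg, abs_of_pos (Real.exp_pos _)]
    rw [h2, show (1:ℝ) * |z| + -(1/2) * z^2 = |z| + (-z^2/2) from by ring, Real.exp_add, one_mul]
    exact mul_le_mul_of_nonneg_right (abs_le_exp_abs z) (Real.exp_pos _).le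
  have h := integral_mul_deriv_eq_deriv_mul_of_integrable (fun x _ => hu x) (fun x _ => exp_deriv_aux x) huv' hu'v huv
  have hL : ∫ x : ℝ, x * (x * Real.exp (-x^2/2)) = ∫ x : ℝ, x^2 * Real.exp (-x^2/2) := by
    congr 1; funext x; ring
  have hR : - ∫ x : ℝ, 1 * -Real.exp (-x^2/2) = ∫ x : ℝ, Real.exp (-(1/2) * x^2) := by
    rw [show (fun x : ℝ => 1 * -Real.exp (-x^2/2)) = fun x : ℝ => -Real.exp (-(1/2) * x^2) from by funext x; rw [one_mul]; congr 1; ring]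
    rw [integral_neg, neg_neg]
  rw [hL, hR] at h
  rw [h, integral_gaussian]
  congr 1
  rw [div_div_eq_mul_div, div_one, mul_comm]

lemma integrable_sq_G : Integrable (fun z : ℝ => z^2) (gaussianReal 0 1) := by
  refine integrable_G_exp (continuous_pow 2).stronglyMeasurable (C := 4) (a := 1) (b := 0) (by norm_num) fun z => ?_
  rw [abs_of_nonneg (sq_nonneg z)]
  simpa using sq_le_exp_abs z

lemma integrable_id_G : Integrable (fun z : ℝ => z) (gaussianReal 0 1) := by
  refine integrable_G_exp continuous_id.stronglyMeasurable (C := 1) (a := 1) (b := 0) (by norm_num) fun z => ?_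
  simpa using abs_le_exp_abs z

lemma integral_sq_G : ∫ z, z^2 ∂(gaussianReal 0 1) = 1 := by
  rw [integral_G_eq]
  have h : (fun z => gaussianPDFReal 0 1 z * z^2)
      = fun z => (Real.sqrt (2*π))⁻¹ * (z^2 * Real.exp (-z^2/2)) := by
    funext z; rw [pdf_formula]; ring
  rw [h, integral_const_mul, integral_sq_vol, inv_mul_cancel₀ (ne_of_gt sqrt2pi_pos)]

lemma integral_shift_sq (c : ℝ) : ∫ z, (z + c)^2 ∂(gaussianReal 0 1) = 1 + c^2 := by
  have h : (fun z : ℝ => (z+c)^2) = fun z => z^2 + (2*c*z + c^2) := by funext z; ring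
  have hI0 : Integrable (fun z : ℝ => 2*c*z) (gaussianReal 0 1) := integrable_id_G.const_mul (2*c)
  have hI1 : Integrable (fun z : ℝ => 2*c*z + c^2) (gaussianReal 0 1) := hI0.add (integrable_const _)
  rw [h, integral_add integrable_sq_G hI1, integral_add hI0 (integrable_const _),
    integral_const_mul, integral_sq_G, integral_id_G, integral_const]
  simp

def rho (P : Measure ℝ) (s y : ℝ) : ℝ := ∫ x, gaussianPDFReal 0 1 (y - s * x) ∂P

variable {P : Measure ℝ} [IsProbabilityMeasure P]

lemma rho_SM (s : ℝ) : StronglyMeasurable (rho P s) := by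
  apply MeasureTheory.StronglyMeasurable.integral_prod_right'
    (f := fun p : ℝ × ℝ => gaussianPDFReal 0 1 (p.1 - s * p.2))
  exact ((pdf_cont 0 1).comp
    (continuous_fst.sub (continuous_const.mul continuous_snd))).stronglyMeasurable

lemma integrable_slice (s y : ℝ) : Integrable (fun x => gaussianPDFReal 0 1 (y - s*x)) P := by
  refine Integrable.mono' (integrable_const ((Real.sqrt (2*π))⁻¹)) ?_ (ae_of_all _ fun x => ?_)
  · exact ((pdf_cont 0 1).comp
      (continuous_const.sub (continuous_const.mul continuous_id))).aestronglyMeasurable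
  · rw [Real.norm_eq_abs, abs_of_pos (pdf_pos _)]; exact pdf_le _

lemma rho_le (s y : ℝ) : rho P s y ≤ (Real.sqrt (2*π))⁻¹ := by
  have h := integral_mono (integrable_slice (P := P) s y) (integrable_const ((Real.sqrt (2*π))⁻¹))
    (fun x => pdf_le (y - s*x))
  simpa [rho] using h

lemma rho_ge {K s : ℝ} (hK : ∀ᵐ x ∂P, |x| ≤ K) (hs : 0 ≤ s) (y : ℝ) :
    (Real.sqrt (2*π))⁻¹ * Real.exp (-(|y| + s*K)^2/2) ≤ rho P s y := by
  have hKb : ∀ᵐ x ∂P, (Real.sqrt (2*π))⁻¹ * Real.exp (-(|y| + s*K)^2/2)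
      ≤ gaussianPDFReal 0 1 (y - s*x) := by
    filter_upwards [hK] with x hx
    rw [pdf_formula]
    apply mul_le_mul_of_nonneg_left _ (by positivity)
    apply Real.exp_le_exp.2
    have h1 : |y - s*x| ≤ |y| + s*K := by
      calc |y - s*x| = |y + -(s*x)| := by ring_nf
        _ ≤ |y| + |(-(s*x))| := abs_add_le _ _
        _ = |y| + s * |x| := by rw [abs_neg, abs_mul, abs_of_nonneg hs]
        _ ≤ |y| + s*K := by nlinarith
    nlinarith [sq_abs (y - s*x), abs_nonneg (y - s*x), abs_nonneg y]
  have h := integral_mono_ae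
    (integrable_const ((Real.sqrt (2*π))⁻¹ * Real.exp (-(|y| + s*K)^2/2)))
    (integrable_slice (P := P) s y) hKb
  simpa [rho] using h

lemma rho_pos {K s : ℝ} (hK : ∀ᵐ x ∂P, |x| ≤ K) (hs : 0 ≤ s) (y : ℝ) : 0 < rho P s y :=
  lt_of_lt_of_le (by positivity) (rho_ge hK hs y)

lemma log_rho_abs_le {K s : ℝ} (hK : ∀ᵐ x ∂P, |x| ≤ K) (hs : 0 ≤ s) (y : ℝ) :
    |Real.log (rho P s y)| ≤ (|y| + s*K)^2/2 + Real.log (Real.sqrt (2*π)) := by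
  rw [abs_le]
  constructor
  · have h := Real.log_le_log (by positivity) (rho_ge hK hs y)
    rw [Real.log_mul (by positivity) (Real.exp_ne_zero _), Real.log_inv, Real.log_exp] at h
    linarith
  · have h := Real.log_le_log (rho_pos hK hs y) (rho_le s y)
    rw [Real.log_inv] at h
    nlinarith [log_sqrt2pi_nonneg, sq_nonneg (|y| + s*K)]

set_option maxHeartbeats 1000000 in
lemma key (P : Measure ℝ) [IsProbabilityMeasure P] {K : ℝ} (hK : ∀ᵐ x ∂P, |x| ≤ K)
    (hK0 : 0 ≤ K) (hsq_int : Integrable (fun x => x^2) P) (hm : 0 < ∫ x, x^2 ∂P)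
    {r : ℝ} (hr : 0 < r) :
    r * (∫ x, x^2 ∂P) / 2 - Real.log (1 + r * (∫ x, x^2 ∂P)) / 2 ≤
      ∫ xs, ∫ z, Real.log (∫ x, Real.exp (Real.sqrt r * z * x + r * x * xs - r / 2 * x ^ 2) ∂P)
        ∂(gaussianReal 0 1) ∂P := by
  set m := ∫ x, x^2 ∂P with hm_def
  set s := Real.sqrt r with hs_def
  have hs : 0 < s := Real.sqrt_pos.2 hr
  have hs2 : s^2 = r := Real.sq_sqrt hr.le
  set σ : ℝ := 1 + r * m with hσ_def
  have hσ1 : 1 < σ := by nlinarith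
  have hσ0 : 0 < σ := by linarith
  set b2 : ℝ := (1 - 1/σ)/2 with hb2_def
  have hinvσ0 : 0 < 1/σ := by positivity
  have hinvσ1 : 1/σ < 1 := by rw [div_lt_one hσ0]; linarith
  have hb2a : 0 ≤ b2 := by rw [hb2_def]; linarith
  have hb2b : b2 < 1/2 := by rw [hb2_def]; linarith
  set v : NNReal := ⟨σ, hσ0.le⟩ with hv_def
  have hv : v ≠ 0 := by
    rw [← NNReal.coe_ne_zero]
    exact ne_of_gt hσ0
  set gg : ℝ → ℝ := gaussianPDFReal 0 v with hgg_def
  have hgg_formula : ∀ y, gg y = (Real.sqrt (2*π*σ))⁻¹ * Real.exp (-y^2/(2*σ)) := by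
    intro y
    rw [hgg_def]
    simp [gaussianPDFReal, hv_def]
    rfl
  have hgg_pos : ∀ y, 0 < gg y := fun y => gaussianPDFReal_pos _ _ _ hv
  have h2πσ : (0:ℝ) < 2*π*σ := mul_pos two_pi_pos hσ0
  have hsqrtσ : (0:ℝ) < Real.sqrt (2*π*σ) := Real.sqrt_pos.2 h2πσ
  have hgg_log : ∀ y, Real.log (gg y) = -(1/(2*σ)) * y^2 - Real.log (Real.sqrt (2*π*σ)) := by
    intro y
    rw [hgg_formula y, Real.log_mul (inv_ne_zero hsqrtσ.ne') (Real.exp_ne_zero _),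
      Real.log_inv, Real.log_exp]
    ring
  set D : ℝ → ℝ := fun y => gg y / rho P s y with hD_def
  have hρ_pos : ∀ y, 0 < rho P s y := fun y => rho_pos hK hs.le y
  have hD_pos : ∀ y, 0 < D y := fun y => div_pos (hgg_pos y) (hρ_pos y)
  have hD_SM : StronglyMeasurable D :=
    ((pdf_cont 0 v).measurable.div (rho_SM s).measurable).stronglyMeasurable
  have hD_bound : ∀ y, D y ≤ Real.exp ((s*K)^2/2 + (s*K)*|y| + b2*y^2) := by
    intro y
    rw [hD_def]
    rw [div_le_iff₀ (hρ_pos y)]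
    have h1 : gg y ≤ (Real.sqrt (2*π))⁻¹ * Real.exp (-y^2/(2*σ)) := by
      rw [hgg_formula y]
      apply mul_le_mul_of_nonneg_right _ (Real.exp_pos _).le
      apply inv_anti₀ sqrt2pi_pos
      apply Real.sqrt_le_sqrt
      nlinarith [two_pi_pos]
    calc gg y ≤ (Real.sqrt (2*π))⁻¹ * Real.exp (-y^2/(2*σ)) := h1
      _ = Real.exp ((s*K)^2/2 + (s*K)*|y| + b2*y^2) * ((Real.sqrt (2*π))⁻¹ * Real.exp (-(|y| + s*K)^2/2)) := by
          rw [show Real.exp ((s*K)^2/2 + (s*K)*|y| + b2*y^2) * ((Real.sqrt (2*π))⁻¹ * Real.exp (-(|y| + s*K)^2/2))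
              = (Real.sqrt (2*π))⁻¹ * (Real.exp ((s*K)^2/2 + (s*K)*|y| + b2*y^2) * Real.exp (-(|y| + s*K)^2/2)) from by ring,
            ← Real.exp_add]
          congr 2
          have hyy : |y|^2 = y^2 := sq_abs y
          have hexp : (|y| + s*K)^2 = y^2 + 2*(s*K)*|y| + (s*K)^2 := by rw [← hyy]; ring
          rw [hb2_def, hexp]
          field_simp
          ring
      _ ≤ Real.exp ((s*K)^2/2 + (s*K)*|y| + b2*y^2) * rho P s y :=
          mul_le_mul_of_nonneg_left (rho_ge hK hs.le y) (Real.exp_pos _).le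
  -- pointwise identity for the inner log-integral
  have hinner : ∀ xs z : ℝ,
      Real.log (∫ x, Real.exp (s * z * x + r * x * xs - r / 2 * x ^ 2) ∂P)
      = ((z + s*xs)^2/2 + Real.log (Real.sqrt (2*π))) + Real.log (rho P s (z + s*xs)) := by
    intro xs z
    have hpt : (fun x => Real.exp (s * z * x + r * x * xs - r / 2 * x ^ 2))
        = fun x => Real.exp ((z + s*xs)^2/2) * (Real.sqrt (2*π) * gaussianPDFReal 0 1 ((z + s*xs) - s * x)) := by
      funext x
      rw [pdf_formula,
        show Real.sqrt (2*π) * ((Real.sqrt (2*π))⁻¹ * Real.exp (-((z + s*xs) - s*x)^2/2))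
          = Real.exp (-((z + s*xs) - s*x)^2/2) from by
            rw [← mul_assoc, mul_inv_cancel₀ (ne_of_gt sqrt2pi_pos), one_mul],
        ← Real.exp_add]
      congr 1
      rw [← hs2]
      ring
    have h2 : ∫ x, Real.exp (s*z*x + r*x*xs - r/2*x^2) ∂P
        = Real.exp ((z+s*xs)^2/2) * (Real.sqrt (2*π) * rho P s (z+s*xs)) := by
      rw [show (fun x => Real.exp (s*z*x + r*x*xs - r/2*x^2)) = _ from hpt]
      rw [integral_const_mul, integral_const_mul]
      rfl
    rw [h2, Real.log_mul (Real.exp_ne_zero _) (ne_of_gt (mul_pos sqrt2pi_pos (hρ_pos _))),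
      Real.log_exp, Real.log_mul (ne_of_gt sqrt2pi_pos) (ne_of_gt (hρ_pos _))]
    ring
  have hre : ∀ xs : ℝ, (fun z => Real.log (∫ x, Real.exp (s*z*x + r*x*xs - r/2*x^2) ∂P))
      = fun z => ((z + s*xs)^2/2 + Real.log (Real.sqrt (2*π))) + Real.log (rho P s (z + s*xs)) :=
    fun xs => funext fun z => hinner xs z
  -- integrability over z, for each shift c
  have Iquad : ∀ c : ℝ, Integrable (fun z => (z + c)^2) (gaussianReal 0 1) := by
    intro c
    refine integrable_G_exp ((continuous_id.add continuous_const).pow 2).stronglyMeasurable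
      (C := 8 + 2*c^2) (a := 1) (b := 0) (by norm_num) fun z => ?_
    simp only [one_mul, zero_mul, add_zero]
    rw [abs_of_nonneg (sq_nonneg _)]
    nlinarith [sq_le_exp_abs z, one_le_exp_abs z, sq_abs z, sq_nonneg (z - c), sq_nonneg c, Real.exp_pos |z|]
  have I1 : ∀ c : ℝ, Integrable (fun z => ((z + c)^2/2 + Real.log (Real.sqrt (2*π)))) (gaussianReal 0 1) :=
    fun c => ((Iquad c).div_const 2).add (integrable_const _)
  have IlogR : ∀ c : ℝ, Integrable (fun z => Real.log (rho P s (z + c))) (gaussianReal 0 1) := by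
    intro c
    refine integrable_G_exp
      ((Real.measurable_log.comp ((rho_SM s).measurable.comp (measurable_id.add_const c))).stronglyMeasurable)
      (C := 4 + (|c| + s*K)^2 + Real.log (Real.sqrt (2*π))) (a := 1) (b := 0) (by norm_num) fun z => ?_
    simp only [one_mul, zero_mul, add_zero]
    have h0 := log_rho_abs_le hK hs.le (z + c)
    have h2 := abs_add_le z c
    have h5 : (|z + c| + s*K)^2 ≤ 2*|z|^2 + 2*(|c| + s*K)^2 := by
      nlinarith [sq_nonneg (|z| - (|c| + s*K)), abs_nonneg z, abs_nonneg c, abs_nonneg (z+c),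
        mul_nonneg hs.le hK0]
    nlinarith [sq_le_exp_abs z, one_le_exp_abs z, sq_abs z, log_sqrt2pi_nonneg,
      sq_nonneg (|c| + s*K), h0, h5]
  have IlogG : ∀ c : ℝ, Integrable (fun z => Real.log (gg (z + c))) (gaussianReal 0 1) := by
    intro c
    have h : (fun z => Real.log (gg (z + c)))
        = fun z => -(1/(2*σ)) * (z+c)^2 - Real.log (Real.sqrt (2*π*σ)) :=
      funext fun z => hgg_log (z+c)
    rw [h]
    exact ((Iquad c).const_mul _).sub (integrable_const _)
  have ID : ∀ c : ℝ, Integrable (fun z => D (z + c)) (gaussianReal 0 1) := by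
    intro c
    refine integrable_G_exp (hD_SM.comp_measurable (measurable_id.add_const c))
      (C := Real.exp ((s*K)^2/2 + (s*K)*|c| + c^2/2)) (a := s*K + |c|) (b := b2) hb2b fun z => ?_
    rw [abs_of_pos (hD_pos _)]
    refine (hD_bound (z+c)).trans ?_
    rw [← Real.exp_add]
    apply Real.exp_le_exp.2
    have h2 := abs_add_le z c
    have h3 : z*c ≤ |z| * |c| := by rw [← abs_mul]; exact le_abs_self _
    have hW0 : (0:ℝ) ≤ s*K := mul_nonneg hs.le hK0
    nlinarith [mul_le_mul_of_nonneg_left h2 hW0,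
      mul_le_mul_of_nonneg_left h3 (by linarith : (0:ℝ) ≤ 2*b2),
      mul_nonneg (by linarith : (0:ℝ) ≤ 1/2 - b2) (sq_nonneg c),
      mul_nonneg (by linarith : (0:ℝ) ≤ 1 - 2*b2) (mul_nonneg (abs_nonneg z) (abs_nonneg c)),
      sq_nonneg z, sq_nonneg c, hb2a, abs_nonneg z, abs_nonneg c]
  have IlogG1 : ∀ c : ℝ, Integrable (fun z => Real.log (gg (z + c)) + 1) (gaussianReal 0 1) :=
    fun c => (IlogG c).add (integrable_const 1)
  have Ilower : ∀ c : ℝ, Integrable (fun z => (Real.log (gg (z + c)) + 1) - D (z + c)) (gaussianReal 0 1) :=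
    fun c => (IlogG1 c).sub (ID c)
  -- per-xs lower bound
  have hstep : ∀ xs : ℝ,
      (1 - 1/σ)/2 * (1 + (s*xs)^2) + (1 - Real.log σ/2) - (∫ z, D (z + s*xs) ∂(gaussianReal 0 1))
        ≤ ∫ z, Real.log (∫ x, Real.exp (s*z*x + r*x*xs - r/2*x^2) ∂P) ∂(gaussianReal 0 1) := by
    intro xs
    have hmono : ∫ z, ((Real.log (gg (z + s*xs)) + 1) - D (z + s*xs)) ∂(gaussianReal 0 1)
        ≤ ∫ z, Real.log (rho P s (z + s*xs)) ∂(gaussianReal 0 1) := by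
      apply integral_mono (Ilower (s*xs)) (IlogR (s*xs))
      intro z
      have h2 := Real.log_le_sub_one_of_pos (hD_pos (z + s*xs))
      rw [hD_def] at h2
      simp only at h2
      rw [Real.log_div (ne_of_gt (hgg_pos _)) (ne_of_gt (hρ_pos _))] at h2
      have h3 : D (z + s*xs) = gg (z + s*xs) / rho P s (z + s*xs) := by rw [hD_def]
      show (Real.log (gg (z + s*xs)) + 1) - D (z + s*xs) ≤ Real.log (rho P s (z + s*xs))
      rw [h3]
      linarith
    have hsub : ∫ z, ((Real.log (gg (z + s*xs)) + 1) - D (z + s*xs)) ∂(gaussianReal 0 1)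
        = ∫ z, (Real.log (gg (z + s*xs)) + 1) ∂(gaussianReal 0 1)
          - ∫ z, D (z + s*xs) ∂(gaussianReal 0 1) :=
      integral_sub (IlogG1 _) (ID _)
    have hcomb : ∫ z, ((z + s*xs)^2/2 + Real.log (Real.sqrt (2*π))) ∂(gaussianReal 0 1)
          + ∫ z, (Real.log (gg (z + s*xs)) + 1) ∂(gaussianReal 0 1)
        = (1 - 1/σ)/2 * (1 + (s*xs)^2) + (1 - Real.log σ/2) := by
      rw [← integral_add (I1 _) (IlogG1 _)]
      have hpt : (fun z => (((z + s*xs)^2/2 + Real.log (Real.sqrt (2*π)))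
            + (Real.log (gg (z + s*xs)) + 1)))
          = fun z => (1 - 1/σ)/2 * (z + s*xs)^2 + (1 - Real.log σ/2) := by
        funext z
        rw [hgg_log (z + s*xs), Real.log_sqrt h2πσ.le, Real.log_sqrt two_pi_pos.le,
          Real.log_mul (ne_of_gt two_pi_pos) (ne_of_gt hσ0)]
        field_simp
        ring
      rw [hpt, integral_add ((Iquad _).const_mul _) (integrable_const _), integral_const_mul,
        integral_shift_sq, integral_const]
      simp [measure_univ]
    calc (1 - 1/σ)/2 * (1 + (s*xs)^2) + (1 - Real.log σ/2) - ∫ z, D (z + s*xs) ∂(gaussianReal 0 1)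
        = (∫ z, ((z + s*xs)^2/2 + Real.log (Real.sqrt (2*π))) ∂(gaussianReal 0 1)
          + ∫ z, (Real.log (gg (z + s*xs)) + 1) ∂(gaussianReal 0 1))
          - ∫ z, D (z + s*xs) ∂(gaussianReal 0 1) := by rw [hcomb]
      _ = ∫ z, ((z + s*xs)^2/2 + Real.log (Real.sqrt (2*π))) ∂(gaussianReal 0 1)
          + (∫ z, (Real.log (gg (z + s*xs)) + 1) ∂(gaussianReal 0 1)
            - ∫ z, D (z + s*xs) ∂(gaussianReal 0 1)) := by ring
      _ = ∫ z, ((z + s*xs)^2/2 + Real.log (Real.sqrt (2*π))) ∂(gaussianReal 0 1)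
          + ∫ z, ((Real.log (gg (z + s*xs)) + 1) - D (z + s*xs)) ∂(gaussianReal 0 1) := by rw [hsub]
      _ ≤ ∫ z, ((z + s*xs)^2/2 + Real.log (Real.sqrt (2*π))) ∂(gaussianReal 0 1)
          + ∫ z, Real.log (rho P s (z + s*xs)) ∂(gaussianReal 0 1) := by linarith [hmono]
      _ = ∫ z, (((z + s*xs)^2/2 + Real.log (Real.sqrt (2*π))) + Real.log (rho P s (z + s*xs)))
            ∂(gaussianReal 0 1) := (integral_add (I1 _) (IlogR _)).symm
      _ = ∫ z, Real.log (∫ x, Real.exp (s*z*x + r*x*xs - r/2*x^2) ∂P) ∂(gaussianReal 0 1) := by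
          rw [hre xs]
  -- global measurability
  have hf_SM : StronglyMeasurable (fun p : ℝ × ℝ =>
      Real.log (∫ x, Real.exp (s * p.2 * x + r * x * p.1 - r/2 * x^2) ∂P)) := by
    have hc : Continuous (fun q : (ℝ × ℝ) × ℝ =>
        Real.exp (s * q.1.2 * q.2 + r * q.2 * q.1.1 - r/2 * q.2^2)) := by fun_prop
    have h1 := hc.stronglyMeasurable.integral_prod_right' (ν := P)
    exact (Real.measurable_log.comp h1.measurable).stronglyMeasurable
  have hJ_SM : StronglyMeasurable (fun xs => ∫ z,
      Real.log (∫ x, Real.exp (s*z*x + r*x*xs - r/2*x^2) ∂P) ∂(gaussianReal 0 1)) :=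
    hf_SM.integral_prod_right'
  have hTf_SM : StronglyMeasurable (fun p : ℝ × ℝ => D (p.2 + s * p.1)) :=
    hD_SM.comp_measurable (measurable_snd.add (measurable_fst.const_mul s))
  have hT_SM : StronglyMeasurable (fun xs => ∫ z, D (z + s*xs) ∂(gaussianReal 0 1)) :=
    hTf_SM.integral_prod_right'
  -- dominating bounds uniform over |xs| ≤ K
  have hDOMJ_int : Integrable (fun z => (|z| + 2*(s*K))^2 + 2*Real.log (Real.sqrt (2*π)))
      (gaussianReal 0 1) := by
    refine integrable_G_exp (((continuous_abs.add continuous_const).pow 2).add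
        continuous_const).stronglyMeasurable
      (C := 8 + 8*(s*K)^2 + 2*Real.log (Real.sqrt (2*π))) (a := 1) (b := 0) (by norm_num) fun z => ?_
    simp only [one_mul, zero_mul, add_zero]
    rw [abs_of_nonneg (add_nonneg (sq_nonneg _) (by linarith [log_sqrt2pi_nonneg]))]
    nlinarith [sq_le_exp_abs z, one_le_exp_abs z, sq_abs z, abs_nonneg z,
      mul_nonneg hs.le hK0, log_sqrt2pi_nonneg, sq_nonneg (|z| - 2*(s*K)), Real.exp_pos |z|]
  have hJ_bound : ∀ᵐ xs ∂P, ‖∫ z, Real.log (∫ x, Real.exp (s*z*x + r*x*xs - r/2*x^2) ∂P)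
        ∂(gaussianReal 0 1)‖
      ≤ ∫ z, ((|z| + 2*(s*K))^2 + 2*Real.log (Real.sqrt (2*π))) ∂(gaussianReal 0 1) := by
    filter_upwards [hK] with xs hxs
    have hcW : |s * xs| ≤ s*K := by
      rw [abs_mul, abs_of_pos hs]
      exact mul_le_mul_of_nonneg_left hxs hs.le
    rw [Real.norm_eq_abs, hre xs]
    have hint : Integrable (fun z => ((z + s*xs)^2/2 + Real.log (Real.sqrt (2*π)))
        + Real.log (rho P s (z + s*xs))) (gaussianReal 0 1) := (I1 _).add (IlogR _)
    calc |∫ z, (((z + s*xs)^2/2 + Real.log (Real.sqrt (2*π))) + Real.log (rho P s (z + s*xs)))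
          ∂(gaussianReal 0 1)|
        ≤ ∫ z, |((z + s*xs)^2/2 + Real.log (Real.sqrt (2*π))) + Real.log (rho P s (z + s*xs))|
          ∂(gaussianReal 0 1) := by
          exact abs_integral_le_integral_abs
      _ ≤ ∫ z, ((|z| + 2*(s*K))^2 + 2*Real.log (Real.sqrt (2*π))) ∂(gaussianReal 0 1) := by
          apply integral_mono hint.abs hDOMJ_int
          intro z
          have h0 := log_rho_abs_le hK hs.le (z + s*xs)
          have h2 := abs_add_le z (s*xs)
          have h5 : |z + s*xs| ≤ |z| + s*K := by linarith
          have h3 := abs_add_le ((z + s*xs)^2/2 + Real.log (Real.sqrt (2*π)))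
            (Real.log (rho P s (z + s*xs)))
          have h4 : |(z + s*xs)^2/2 + Real.log (Real.sqrt (2*π))|
              = (z + s*xs)^2/2 + Real.log (Real.sqrt (2*π)) :=
            abs_of_nonneg (add_nonneg (by positivity) log_sqrt2pi_nonneg)
          have hW0 : (0:ℝ) ≤ s*K := mul_nonneg hs.le hK0
          nlinarith [sq_abs (z + s*xs), abs_nonneg (z + s*xs), abs_nonneg z,
            log_sqrt2pi_nonneg, h0, h3, h4, h5,
            mul_le_mul h5 h5 (abs_nonneg _) (by linarith [abs_nonneg z]),
            mul_le_mul (by linarith : |z + s*xs| + s*K ≤ |z| + 2*(s*K))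
              (by linarith : |z + s*xs| + s*K ≤ |z| + 2*(s*K))
              (by linarith [abs_nonneg (z + s*xs)]) (by linarith [abs_nonneg z])]
  have hJ_int : Integrable (fun xs => ∫ z,
      Real.log (∫ x, Real.exp (s*z*x + r*x*xs - r/2*x^2) ∂P) ∂(gaussianReal 0 1)) P :=
    Integrable.mono' (integrable_const _) hJ_SM.aestronglyMeasurable hJ_bound
  have hT_nonneg : ∀ xs : ℝ, 0 ≤ ∫ z, D (z + s*xs) ∂(gaussianReal 0 1) :=
    fun xs => integral_nonneg fun z => (hD_pos _).le
  have hDOMT_int : Integrable (fun z => Real.exp (2*(s*K)^2 + 2*(s*K)*|z| + b2*z^2))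
      (gaussianReal 0 1) := by
    refine integrable_G_exp (Continuous.stronglyMeasurable (by fun_prop))
      (C := Real.exp (2*(s*K)^2)) (a := 2*(s*K)) (b := b2) hb2b fun z => ?_
    have hE : Real.exp (2*(s*K)^2) * Real.exp (2*(s*K) * |z| + b2 * z ^ 2)
        = Real.exp (2*(s*K)^2 + (2*(s*K) * |z| + b2 * z ^ 2)) := (Real.exp_add _ _).symm
    rw [abs_of_pos (Real.exp_pos _), hE]
    exact Real.exp_le_exp.2 (le_of_eq (by ring))
  have hT_bound : ∀ᵐ xs ∂P, ‖∫ z, D (z + s*xs) ∂(gaussianReal 0 1)‖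
      ≤ ∫ z, Real.exp (2*(s*K)^2 + 2*(s*K)*|z| + b2*z^2) ∂(gaussianReal 0 1) := by
    filter_upwards [hK] with xs hxs
    have hcW : |s * xs| ≤ s*K := by
      rw [abs_mul, abs_of_pos hs]
      exact mul_le_mul_of_nonneg_left hxs hs.le
    rw [Real.norm_eq_abs, abs_of_nonneg (hT_nonneg xs)]
    apply integral_mono (ID _) hDOMT_int
    intro z
    refine (hD_bound (z + s*xs)).trans (Real.exp_le_exp.2 ?_)
    have h2 := abs_add_le z (s*xs)
    have h3 : z*(s*xs) ≤ |z| * (s*K) := by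
      calc z*(s*xs) ≤ |z*(s*xs)| := le_abs_self _
        _ = |z| * |s*xs| := abs_mul _ _
        _ ≤ |z| * (s*K) := mul_le_mul_of_nonneg_left hcW (abs_nonneg z)
    have h4 : (s*xs)^2 ≤ (s*K)^2 := by
      nlinarith [abs_nonneg (s*xs), hcW, sq_abs (s*xs)]
    have hW0 : (0:ℝ) ≤ s*K := mul_nonneg hs.le hK0
    nlinarith [mul_le_mul_of_nonneg_left h2 hW0,
      mul_le_mul_of_nonneg_left h3 (by linarith : (0:ℝ) ≤ 2*b2),
      mul_le_mul hb2b.le h4 (sq_nonneg _) (by norm_num),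
      mul_le_mul_of_nonneg_left hcW hW0,
      mul_nonneg (mul_nonneg hW0 (abs_nonneg z)) (by linarith : (0:ℝ) ≤ 1 - 2*b2),
      hb2a, abs_nonneg z, hcW, sq_nonneg (s*xs)]
  have hT_int : Integrable (fun xs => ∫ z, D (z + s*xs) ∂(gaussianReal 0 1)) P :=
    Integrable.mono' (integrable_const _) hT_SM.aestronglyMeasurable hT_bound
  have hA_int : Integrable (fun xs : ℝ =>
      (1 - 1/σ)/2 * (1 + (s*xs)^2) + (1 - Real.log σ/2)) P := by
    have h : (fun xs : ℝ => (1 - 1/σ)/2 * (1 + (s*xs)^2) + (1 - Real.log σ/2))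
        = fun xs => ((1 - 1/σ)/2 * s^2) * xs^2 + ((1 - 1/σ)/2 + (1 - Real.log σ/2)) := by
      funext xs; ring
    rw [h]
    exact (hsq_int.const_mul _).add (integrable_const _)
  -- Step 6 : ∫ T ≤ 1
  have hDvol_int : ∀ c : ℝ, Integrable (fun y => gaussianPDFReal 0 1 (y - c) * D y) := by
    intro c
    refine integrable_vol_exp
      ((((pdf_cont 0 1).comp (continuous_id.sub continuous_const)).stronglyMeasurable.mul
        hD_SM).aestronglyMeasurable)
      (C := (Real.sqrt (2*π))⁻¹ * Real.exp ((s*K)^2/2 + c^2/2)) (a := s*K + |c|)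
      (b := b2 - 1/2) (by linarith) fun y => ?_
    rw [abs_of_pos (mul_pos (pdf_pos _) (hD_pos _)), pdf_formula]
    calc (Real.sqrt (2*π))⁻¹ * Real.exp (-(y-c)^2/2) * D y
        ≤ (Real.sqrt (2*π))⁻¹ * Real.exp (-(y-c)^2/2)
            * Real.exp ((s*K)^2/2 + (s*K)*|y| + b2*y^2) :=
          mul_le_mul_of_nonneg_left (hD_bound y) (by positivity)
      _ = (Real.sqrt (2*π))⁻¹ * Real.exp (-(y-c)^2/2 + ((s*K)^2/2 + (s*K)*|y| + b2*y^2)) := by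
          rw [mul_assoc, ← Real.exp_add]
      _ ≤ (Real.sqrt (2*π))⁻¹ * Real.exp ((s*K)^2/2 + c^2/2)
            * Real.exp ((s*K + |c|) * |y| + (b2 - 1/2) * y ^ 2) := by
          rw [mul_assoc ((Real.sqrt (2*π))⁻¹), ← Real.exp_add]
          apply mul_le_mul_of_nonneg_left _ (by positivity)
          apply Real.exp_le_exp.2
          have h3 : y*c ≤ |y| * |c| := by rw [← abs_mul]; exact le_abs_self _
          nlinarith [h3]
  have hshift : ∀ c : ℝ, ∫ z, D (z + c) ∂(gaussianReal 0 1)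
      = ∫ y, gaussianPDFReal 0 1 (y - c) * D y := by
    intro c
    rw [integral_G_eq (fun z => D (z + c))]
    have h := integral_add_right_eq_self (μ := volume)
      (fun y => gaussianPDFReal 0 1 (y - c) * D y) c
    simp only [add_sub_cancel_right] at h
    exact h
  have hmeas_prod : Measurable (fun q : ℝ × ℝ =>
      ENNReal.ofReal (gaussianPDFReal 0 1 (q.2 - s*q.1) * D q.2)) := by
    apply Measurable.ennreal_ofReal
    exact (((pdf_cont 0 1).comp
      (continuous_snd.sub (continuous_const.mul continuous_fst))).measurable.mul
      (hD_SM.measurable.comp measurable_snd))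
  have hT_lint : ∫⁻ xs, ENNReal.ofReal (∫ z, D (z + s*xs) ∂(gaussianReal 0 1)) ∂P ≤ 1 := by
    have e1 : ∀ xs : ℝ, ENNReal.ofReal (∫ z, D (z + s*xs) ∂(gaussianReal 0 1))
        = ∫⁻ y, ENNReal.ofReal (gaussianPDFReal 0 1 (y - s*xs) * D y) := by
      intro xs
      rw [hshift (s*xs)]
      exact ofReal_integral_eq_lintegral_ofReal (hDvol_int (s*xs))
        (ae_of_all _ fun y => mul_nonneg (gaussianPDFReal_nonneg _ _ _) (hD_pos y).le)
    apply le_of_eq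
    calc ∫⁻ xs, ENNReal.ofReal (∫ z, D (z + s*xs) ∂(gaussianReal 0 1)) ∂P
        = ∫⁻ xs, (∫⁻ y, ENNReal.ofReal (gaussianPDFReal 0 1 (y - s*xs) * D y)) ∂P :=
          lintegral_congr fun xs => e1 xs
      _ = ∫⁻ y, (∫⁻ xs, ENNReal.ofReal (gaussianPDFReal 0 1 (y - s*xs) * D y) ∂P) := by
          exact lintegral_lintegral_swap hmeas_prod.aemeasurable
      _ = ∫⁻ y, (∫⁻ xs, ENNReal.ofReal (gaussianPDFReal 0 1 (y - s*xs)) ∂P)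
            * ENNReal.ofReal (D y) := by
          apply lintegral_congr
          intro y
          have hmeaspdf : AEMeasurable (fun xs : ℝ =>
              ENNReal.ofReal (gaussianPDFReal 0 1 (y - s*xs))) P :=
            (((measurable_gaussianPDFReal 0 1).comp
              (measurable_const.sub (measurable_id.const_mul s))).ennreal_ofReal).aemeasurable
          rw [← lintegral_mul_const'' _ hmeaspdf]
          apply lintegral_congr
          intro xs
          rw [← ENNReal.ofReal_mul (gaussianPDFReal_nonneg _ _ _)]
      _ = ∫⁻ y, ENNReal.ofReal (rho P s y) * ENNReal.ofReal (D y) := by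
          apply lintegral_congr
          intro y
          congr 1
          simp only [rho]
          exact (ofReal_integral_eq_lintegral_ofReal (integrable_slice s y)
            (ae_of_all _ fun x => gaussianPDFReal_nonneg _ _ _)).symm
      _ = ∫⁻ y, ENNReal.ofReal (gg y) := by
          apply lintegral_congr
          intro y
          rw [← ENNReal.ofReal_mul (hρ_pos y).le]
          congr 1
          have h3 : D y = gg y / rho P s y := by rw [hD_def]
          rw [h3, mul_comm, div_mul_cancel₀ _ (hρ_pos y).ne']
      _ = ENNReal.ofReal (∫ y, gg y) :=
          (ofReal_integral_eq_lintegral_ofReal (integrable_gaussianPDFReal 0 v)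
            (ae_of_all _ fun y => gaussianPDFReal_nonneg _ _ _)).symm
      _ = 1 := by
          rw [show (∫ y, gg y) = 1 from integral_gaussianPDFReal_eq_one 0 hv,
            ENNReal.ofReal_one]
  have hTle1 : ∫ xs, (∫ z, D (z + s*xs) ∂(gaussianReal 0 1)) ∂P ≤ 1 := by
    rw [integral_eq_lintegral_of_nonneg_ae (ae_of_all _ hT_nonneg) hT_SM.aestronglyMeasurable]
    have h := ENNReal.toReal_mono (by simp) hT_lint
    simpa using h
  -- final assembly
  have hfin1 : ∫ xs, ((1 - 1/σ)/2 * (1 + (s*xs)^2) + (1 - Real.log σ/2)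
        - ∫ z, D (z + s*xs) ∂(gaussianReal 0 1)) ∂P
      ≤ ∫ xs, (∫ z, Real.log (∫ x, Real.exp (s*z*x + r*x*xs - r/2*x^2) ∂P)
        ∂(gaussianReal 0 1)) ∂P :=
    integral_mono ((hA_int.sub hT_int)) hJ_int hstep
  have hfin2 : ∫ xs, ((1 - 1/σ)/2 * (1 + (s*xs)^2) + (1 - Real.log σ/2)
        - ∫ z, D (z + s*xs) ∂(gaussianReal 0 1)) ∂P
      = ∫ xs, ((1 - 1/σ)/2 * (1 + (s*xs)^2) + (1 - Real.log σ/2)) ∂P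
        - ∫ xs, (∫ z, D (z + s*xs) ∂(gaussianReal 0 1)) ∂P :=
    integral_sub hA_int hT_int
  have hfin3 : ∫ xs, ((1 - 1/σ)/2 * (1 + (s*xs)^2) + (1 - Real.log σ/2)) ∂P
      = (1 - 1/σ)/2 * (1 + r*m) + (1 - Real.log σ/2) := by
    have h : (fun xs : ℝ => (1 - 1/σ)/2 * (1 + (s*xs)^2) + (1 - Real.log σ/2))
        = fun xs => ((1 - 1/σ)/2 * s^2) * xs^2 + ((1 - 1/σ)/2 + (1 - Real.log σ/2)) := by
      funext xs; ring
    rw [h, integral_add (hsq_int.const_mul _) (integrable_const _), integral_const_mul,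
      integral_const]
    simp only [measure_univ, probReal_univ, ENNReal.toReal_one, smul_eq_mul, one_mul]
    rw [← hm_def, hs2]
    ring
  have hrm_eq : r * m = σ - 1 := by rw [hσ_def]; ring
  have hval : (1 - 1/σ)/2 * (1 + r*m) + (1 - Real.log σ/2) = r*m/2 + 1 - Real.log σ/2 := by
    rw [hrm_eq]
    field_simp
    ring
  have hgoal : r * m / 2 - Real.log σ / 2
      ≤ ∫ xs, (∫ z, Real.log (∫ x, Real.exp (s*z*x + r*x*xs - r/2*x^2) ∂P)
        ∂(gaussianReal 0 1)) ∂P := by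
    rw [hfin2, hfin3, hval] at hfin1
    linarith
  exact hgoal
end SNG

end

open SNG in
set_option maxHeartbeats 1000000 in
theorem stmt2 (P : Measure ℝ) [IsProbabilityMeasure P]
    (K : ℝ) (hK : ∀ᵐ x ∂P, |x| ≤ K)
    (hcent : (∫ x, x ∂P) = 0)
    (ψ : ℝ → ℝ)
    (hψ : ∀ r : ℝ, ψ r =
      ∫ xs, ∫ z, Real.log (∫ x,
          Real.exp (Real.sqrt r * z * x + r * x * xs - r / 2 * x ^ 2) ∂P)
        ∂(gaussianReal 0 1) ∂P)
    (F : ℝ → ℝ → ℝ)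
    (hF : ∀ lam q : ℝ, F lam q = ψ (lam * q) - lam * q ^ 2 / 4)
    (qstar : ℝ → ℝ)
    (hqstar : ∀ lam > (0 : ℝ), 0 ≤ qstar lam ∧ IsMaxOn (F lam) (Set.Ici 0) (qstar lam))
    (huniq : ∀ lam > (0 : ℝ), ∀ q, 0 ≤ q → IsMaxOn (F lam) (Set.Ici 0) q → q = qstar lam) :
    sSup {lam : ℝ | 0 < lam ∧ qstar lam = 0} * (∫ x, x ^ 2 ∂P) ^ 2 ≤ 1 := by
  classical
  have hPne : P ≠ 0 := IsProbabilityMeasure.ne_zero P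
  haveI : (MeasureTheory.ae P).NeBot := MeasureTheory.ae_neBot.mpr hPne
  have hK0 : 0 ≤ K := by
    obtain ⟨x, hx⟩ := hK.exists
    exact (abs_nonneg x).trans hx
  have hsq_int : Integrable (fun x : ℝ => x^2) P := by
    refine Integrable.mono' (integrable_const (K^2)) (continuous_pow 2).aestronglyMeasurable ?_
    filter_upwards [hK] with x hx
    rw [Real.norm_eq_abs, abs_of_nonneg (sq_nonneg x), ← sq_abs x]
    nlinarith [abs_nonneg x]
  set m := ∫ x, x^2 ∂P with hm_def
  have hm0 : 0 ≤ m := integral_nonneg fun x => sq_nonneg x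
  have hψ0 : ψ 0 = 0 := by
    rw [hψ 0]
    have h1 : ∀ xs z : ℝ, Real.log (∫ x,
        Real.exp (Real.sqrt 0 * z * x + 0 * x * xs - 0/2 * x^2) ∂P) = 0 := by
      intro xs z
      simp [Real.sqrt_zero]
    simp only [h1]
    simp
  have hmain : ∀ lam ∈ {lam : ℝ | 0 < lam ∧ qstar lam = 0}, lam * m^2 ≤ 1 := by
    rintro lam ⟨hlam, hq0⟩
    by_contra hcon
    push_neg at hcon
    have hmne : m ≠ 0 := by
      intro h
      rw [h] at hcon
      norm_num at hcon
    have hmpos : 0 < m := lt_of_le_of_ne hm0 (Ne.symm hmne)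
    set ε : ℝ := 1 - 1/(lam * m^2) with hε_def
    have hlm2 : 0 < lam * m^2 := by positivity
    have hεpos : 0 < ε := by
      rw [hε_def]
      have : 1/(lam*m^2) < 1 := by rw [div_lt_one hlm2]; exact hcon
      linarith
    have hε1 : ε < 1 := by
      rw [hε_def]
      have : 0 < 1/(lam*m^2) := by positivity
      linarith
    set u : ℝ := min (1/2) (ε/8) with hu_def
    have hu0 : 0 < u := lt_min (by norm_num) (by positivity)
    have hu2 : u ≤ 1/2 := min_le_left _ _
    have hu3 : u ≤ ε/8 := min_le_right _ _
    set q : ℝ := u / (lam * m) with hq_def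
    have hq0' : 0 < q := div_pos hu0 (by positivity)
    have hr : 0 < lam * q := by positivity
    have hrm : lam * q * m = u := by
      rw [hq_def]
      field_simp
    -- Taylor bound for log(1+u)
    have hlog : Real.log (1 + u) ≤ u - u^2/2 + 2*u^3 := by
      have habs : |(-u)| < 1 := by
        rw [abs_neg, abs_of_pos hu0]; linarith
      have h := Real.abs_log_sub_add_sum_range_le habs 2
      rw [abs_neg, abs_of_pos hu0] at h
      have hsum : (∑ i ∈ Finset.range 2, (-u)^(i+1)/((i:ℝ)+1)) = -u + u^2/2 := by
        rw [Finset.sum_range_succ, Finset.sum_range_succ, Finset.sum_range_zero]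
        norm_num
      rw [hsum, show (1:ℝ) - -u = 1 + u from by ring] at h
      have h2 := (abs_le.1 h).2
      have h3 : u^(2+1)/(1-u) ≤ 2*u^3 := by
        rw [div_le_iff₀ (by linarith : (0:ℝ) < 1 - u)]
        have he : u^(2+1) = u^3 := by norm_num
        rw [he]
        nlinarith [pow_nonneg hu0.le 3, pow_nonneg hu0.le 4, hu2, hu0,
          mul_nonneg (pow_nonneg hu0.le 3) (by linarith : (0:ℝ) ≤ 1 - 2*u)]
      nlinarith [h2, h3]
    -- apply key lemma
    have hkey := key P hK hK0 hsq_int (hm_def ▸ hmpos) hr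
    rw [← hm_def, ← hψ (lam * q)] at hkey
    rw [hrm] at hkey
    -- F lam q > 0
    have hq4 : lam * q^2/4 = u^2*(1-ε)/4 := by
      rw [hq_def, hε_def]
      field_simp
      ring
    have hFq : 0 < F lam q := by
      rw [hF]
      have h5 : u^3 ≤ (ε/8) * u^2 := by nlinarith [sq_nonneg u]
      have h6 : Real.log (1 + u)/2 ≤ u/2 - u^2/4 + u^3 := by linarith
      have h8 : (0:ℝ) < ε * u^2 := mul_pos hεpos (pow_pos hu0 2)
      rw [hq4]
      nlinarith [hkey, h6, h5, h8]
    have hmax := (hqstar lam hlam).2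
    rw [hq0] at hmax
    have hle : F lam q ≤ F lam 0 := hmax (Set.mem_Ici.mpr hq0'.le)
    have hF0 : F lam 0 = 0 := by
      rw [hF]
      simp [hψ0]
    linarith
  by_cases hmz : m = 0
  · rw [hmz]
    norm_num
  · have hmpos : 0 < m := lt_of_le_of_ne hm0 (Ne.symm hmz)
    have hm2 : 0 < m^2 := by positivity
    rcases Set.eq_empty_or_nonempty {lam : ℝ | 0 < lam ∧ qstar lam = 0} with hS | hS
    · rw [hS, Real.sSup_empty]
      norm_num
    · have hbdd : ∀ lam ∈ {lam : ℝ | 0 < lam ∧ qstar lam = 0}, lam ≤ 1/m^2 := by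
        intro lam hl
        have := hmain lam hl
        rw [le_div_iff₀ hm2]
        linarith
      have hsup : sSup {lam : ℝ | 0 < lam ∧ qstar lam = 0} ≤ 1/m^2 := csSup_le hS hbdd
      calc sSup {lam : ℝ | 0 < lam ∧ qstar lam = 0} * m^2 ≤ (1/m^2) * m^2 :=
            mul_le_mul_of_nonneg_right hsup hm2.le
        _ = 1 := by field_simp
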